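/- Let A be a nonzero alternate symmetric n×n matrix over F₂ of rank r. Then there exist linearly independent vectors x₁,…,x_r ∈ F₂ⁿ such that A = x₁x₁ᵀ + ⋯ + x_r x_rᵀ + (x₁+⋯+x_r)(x₁+⋯+x_r)ᵀ. -/

import Mathlib

open Matrix

private lemma zmod2_key : ∀ a b c d e f : ZMod 2,
    (a + e) * (b + f) + (c + e) * (d + f) + (a + c + e) * (b + d + f)
      = e * f + a * d + c * b := by decide

private lemma zmod2_two : ∀ a : ZMod 2, a + a = 0 := by decide

private lemma zmod2_mul_two : ∀ a : ZMod 2, a * 2 = 0 := by decide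

private lemma zmod2_mul_three : ∀ a : ZMod 2, a * 3 = a := by decide

private lemma range_snoc' {α : Type*} {m : ℕ} (f : Fin m → α) (a : α) :
    Set.range (Fin.snoc f a : Fin (m + 1) → α) = insert a (Set.range f) := by
  ext z
  constructor
  · rintro ⟨i, rfl⟩
    refine Fin.lastCases ?_ ?_ i
    · simp
    · intro j; simp
  · rintro (rfl | ⟨i, rfl⟩)
    · exact ⟨Fin.last m, by simp⟩
    · exact ⟨Fin.castSucc i, by simp⟩

private lemma vecMulVec_mulVec' {n : ℕ} (a b y : Fin n → ZMod 2) :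
    (vecMulVec a b) *ᵥ y = (b ⬝ᵥ y) • a := by
  ext i
  simp only [vecMulVec, mulVec, of_apply, dotProduct, Pi.smul_apply, smul_eq_mul,
    Finset.sum_mul]
  exact Finset.sum_congr rfl fun j _ => by ring

private lemma sum_mulVec' {n : ℕ} {ι : Type*} (s : Finset ι)
    (M : ι → Matrix (Fin n) (Fin n) (ZMod 2)) (y : Fin n → ZMod 2) :
    (∑ i ∈ s, M i) *ᵥ y = ∑ i ∈ s, (M i) *ᵥ y := by
  ext k
  simp only [Matrix.mulVec, dotProduct, Finset.sum_apply, Matrix.sum_apply, Finset.sum_mul]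
  rw [Finset.sum_comm]

private theorem alternate_canonical_aux :
    ∀ r n (A : Matrix (Fin n) (Fin n) (ZMod 2)),
    A.IsSymm → (∀ i, A i i = 0) → A.rank = r →
    ∃ x : Fin r → Fin n → ZMod 2, LinearIndependent (ZMod 2) x ∧
      A = (∑ i, vecMulVec (x i) (x i)) + vecMulVec (∑ i, x i) (∑ i, x i) := by
  intro r
  induction r using Nat.strong_induction_on with
  | _ r IH =>
  intro n A hAs halt hr
  by_cases hA0 : A = 0
  · subst hA0
    have hr0 : r = 0 := by simpa using hr.symm
    subst hr0
    refine ⟨fun i => Fin.elim0 i, linearIndependent_empty_type, ?_⟩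
    ext i j
    simp [vecMulVec]
  · -- find p q with A p q = 1
    have hone : ∀ a : ZMod 2, a ≠ 0 → a = 1 := by decide
    obtain ⟨p, q, hpq0⟩ : ∃ p q, A p q ≠ 0 := by
      by_contra h
      push_neg at h
      exact hA0 (by ext i j; simpa using h i j)
    have hpq : A p q = 1 := hone _ hpq0
    have hsym : ∀ i j, A i j = A j i := by
      intro i j
      have := congrFun (congrFun hAs i) j
      simpa [Matrix.transpose_apply] using this.symm
    set u : Fin n → ZMod 2 := fun i => A i p with hu
    set v : Fin n → ZMod 2 := fun i => A i q with hv
    have hup : u p = 0 := halt p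
    have hvq : v q = 0 := halt q
    have huq : u q = 1 := by rw [hu]; simpa [hsym q p] using hpq
    have hvp : v p = 1 := hpq
    set A' : Matrix (Fin n) (Fin n) (ZMod 2) :=
      A + vecMulVec u v + vecMulVec v u with hA'
    have hA'app : ∀ i j, A' i j = A i j + u i * v j + v i * u j := by
      intro i j; simp [hA', vecMulVec, Matrix.add_apply]
    have hA's : A'.IsSymm := by
      ext i j
      simp only [Matrix.transpose_apply, hA'app]
      rw [hsym j i]
      ring
    have halt' : ∀ i, A' i i = 0 := by
      intro i
      rw [hA'app, halt i, zero_add, mul_comm (v i) (u i), zmod2_two]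
    have hrowp : ∀ j, A' p j = 0 := by
      intro j
      rw [hA'app, hup, hvp, zero_mul, one_mul, add_zero]
      show A p j + A j p = 0
      rw [hsym p j, zmod2_two]
    have hrowq : ∀ j, A' q j = 0 := by
      intro j
      rw [hA'app, huq, hvq, one_mul, zero_mul, add_zero]
      show A q j + A j q = 0
      rw [hsym q j, zmod2_two]
    -- elements of the range of A' vanish at p and q
    have hW'0 : ∀ w ∈ LinearMap.range A'.mulVecLin, w p = 0 ∧ w q = 0 := by
      rintro w ⟨y, rfl⟩
      constructor
      · simp [Matrix.mulVecLin_apply, Matrix.mulVec, dotProduct, hrowp]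
      · simp [Matrix.mulVecLin_apply, Matrix.mulVec, dotProduct, hrowq]
    have hAA' : A = A' + vecMulVec u v + vecMulVec v u := by
      ext i j
      simp only [Matrix.add_apply, hA'app, vecMulVec, of_apply]
      ring_nf
      simp [zmod2_mul_two]
    have hu_mem : u ∈ LinearMap.range A.mulVecLin := by
      refine ⟨Pi.single p 1, ?_⟩
      rw [Matrix.mulVecLin_apply, Matrix.mulVec_single]
      ext i; simp [hu]
    have hv_mem : v ∈ LinearMap.range A.mulVecLin := by
      refine ⟨Pi.single q 1, ?_⟩
      rw [Matrix.mulVecLin_apply, Matrix.mulVec_single]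
      ext i; simp [hv]
    set W : Submodule (ZMod 2) (Fin n → ZMod 2) := LinearMap.range A.mulVecLin with hW
    set W' : Submodule (ZMod 2) (Fin n → ZMod 2) := LinearMap.range A'.mulVecLin with hW'
    set U : Submodule (ZMod 2) (Fin n → ZMod 2) := Submodule.span (ZMod 2) {u, v} with hU
    have hu_U : u ∈ U := Submodule.subset_span (Set.mem_insert _ _)
    have hv_U : v ∈ U := Submodule.subset_span (Set.mem_insert_of_mem _ rfl)
    have hWle : W ≤ W' ⊔ U := by
      rintro w ⟨y, rfl⟩
      have : A.mulVecLin y = A'.mulVec y + (v ⬝ᵥ y) • u + (u ⬝ᵥ y) • v := by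
        rw [Matrix.mulVecLin_apply, hAA', Matrix.add_mulVec, Matrix.add_mulVec,
          vecMulVec_mulVec', vecMulVec_mulVec']
      rw [this]
      refine add_mem (add_mem ?_ ?_) ?_
      · exact Submodule.mem_sup_left ⟨y, rfl⟩
      · exact Submodule.mem_sup_right (Submodule.smul_mem _ _ hu_U)
      · exact Submodule.mem_sup_right (Submodule.smul_mem _ _ hv_U)
    have hWge : W' ⊔ U ≤ W := by
      refine sup_le ?_ ?_
      · rintro w ⟨y, rfl⟩
        have : A'.mulVecLin y = A.mulVec y + (v ⬝ᵥ y) • u + (u ⬝ᵥ y) • v := by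
          rw [Matrix.mulVecLin_apply, hA', Matrix.add_mulVec, Matrix.add_mulVec,
            vecMulVec_mulVec', vecMulVec_mulVec']
        rw [this]
        exact add_mem (add_mem ⟨y, rfl⟩ (Submodule.smul_mem _ _ hu_mem))
          (Submodule.smul_mem _ _ hv_mem)
      · rw [hU, Submodule.span_le]
        rintro z (rfl | rfl)
        · exact hu_mem
        · exact hv_mem
    have hWeq : W = W' ⊔ U := le_antisymm hWle hWge
    have hdisj : W' ⊓ U = ⊥ := by
      rw [Submodule.eq_bot_iff]
      rintro z ⟨hzW', hzU⟩
      obtain ⟨s, t, rfl⟩ := Submodule.mem_span_pair.mp hzU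
      obtain ⟨hp0, hq0⟩ := hW'0 _ hzW'
      have hs : s = 0 := by
        have := hq0
        simp only [Pi.add_apply, Pi.smul_apply, smul_eq_mul, huq, hvq, mul_one, mul_zero,
          add_zero] at this
        exact this
      have ht : t = 0 := by
        have := hp0
        simp only [Pi.add_apply, Pi.smul_apply, smul_eq_mul, hup, hvp, mul_one, mul_zero,
          zero_add] at this
        exact this
      simp [hs, ht]
    have huv_li : LinearIndependent (ZMod 2) ![u, v] := by
      rw [LinearIndependent.pair_iff]
      intro s t hst
      have h1 := congrFun hst q
      have h2 := congrFun hst p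
      simp only [Pi.add_apply, Pi.smul_apply, smul_eq_mul, huq, hvq, hup, hvp, mul_one,
        mul_zero, add_zero, zero_add, Pi.zero_apply] at h1 h2
      exact ⟨h1, h2⟩
    have hUrank : Module.finrank (ZMod 2) U = 2 := by
      have hrange : Set.range ![u, v] = {u, v} := by
        ext z
        simp [Fin.exists_fin_two, or_comm, eq_comm]
      rw [hU, ← hrange, finrank_span_eq_card huv_li]
      simp
    have hrank_eq : A.rank = A'.rank + 2 := by
      have := Submodule.finrank_sup_add_finrank_inf_eq W' U
      rw [hdisj, ← hWeq] at this
      simp only [finrank_bot, add_zero] at this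
      rw [Matrix.rank, Matrix.rank, ← hW, ← hW', this, hUrank]
    set r' := A'.rank with hr'
    have hr2 : r = r' + 2 := by rw [← hr, hrank_eq]
    obtain ⟨x', hli', hEq'⟩ := IH r' (by omega) n A' hA's halt' rfl
    set s' : Fin n → ZMod 2 := ∑ i, x' i with hs'
    -- span of x' equals range of A'
    have hspan : Submodule.span (ZMod 2) (Set.range x') = W' := by
      have hle : W' ≤ Submodule.span (ZMod 2) (Set.range x') := by
        have hs'span : s' ∈ Submodule.span (ZMod 2) (Set.range x') := by
          rw [hs']
          exact Submodule.sum_mem _ fun i _ => Submodule.subset_span ⟨i, rfl⟩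
        rintro w ⟨y, rfl⟩
        rw [Matrix.mulVecLin_apply, hEq', Matrix.add_mulVec, sum_mulVec',
          vecMulVec_mulVec']
        refine add_mem (Submodule.sum_mem _ fun i _ => ?_)
          (Submodule.smul_mem _ _ hs'span)
        rw [vecMulVec_mulVec']
        exact Submodule.smul_mem _ _ (Submodule.subset_span ⟨i, rfl⟩)
      have hfr : Module.finrank (ZMod 2) (Submodule.span (ZMod 2) (Set.range x')) = r' := by
        rw [finrank_span_eq_card hli', Fintype.card_fin]
      refine (Submodule.eq_of_le_of_finrank_le hle ?_).symm
      rw [hfr]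
      exact le_of_eq rfl
    have hs'_mem : s' ∈ W' := by
      rw [← hspan, hs']
      exact Submodule.sum_mem _ fun i _ => Submodule.subset_span ⟨i, rfl⟩
    have hx'pq : ∀ i, x' i p = 0 ∧ x' i q = 0 := by
      intro i
      exact hW'0 _ (hspan ▸ Submodule.subset_span ⟨i, rfl⟩)
    obtain ⟨hs'p, hs'q⟩ := hW'0 _ hs'_mem
    set a : Fin n → ZMod 2 := u + s' with ha
    set b : Fin n → ZMod 2 := v + s' with hb
    subst hr2
    set x : Fin (r' + 2) → Fin n → ZMod 2 := Fin.snoc (Fin.snoc x' a) b with hx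
    have haq : a q = 1 := by simp [ha, huq, hs'q]
    have hap : a p = 0 := by simp [ha, hup, hs'p]
    have hbq : b q = 0 := by simp [hb, hvq, hs'q]
    have hbp : b p = 1 := by simp [hb, hvp, hs'p]
    have ha_not : a ∉ Submodule.span (ZMod 2) (Set.range x') := by
      intro hmem
      rw [hspan] at hmem
      exact one_ne_zero (haq ▸ (hW'0 _ hmem).2)
    have hb_not : b ∉ Submodule.span (ZMod 2) (Set.range (Fin.snoc x' a : Fin (r' + 1) → _)) := by
      rw [range_snoc']
      intro hmem
      obtain ⟨γ, w, hwmem, hbw⟩ := Submodule.mem_span_insert.mp hmem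
      rw [hspan] at hwmem
      obtain ⟨hwp, hwq⟩ := hW'0 _ hwmem
      have hγ : γ = 0 := by
        have := congrFun hbw q
        simp only [Pi.add_apply, Pi.smul_apply, smul_eq_mul, haq, hwq, mul_one, add_zero,
          hbq] at this
        exact this.symm
      rw [hγ, zero_smul, zero_add] at hbw
      subst hbw
      exact one_ne_zero (hbp ▸ hwp)
    have hli : LinearIndependent (ZMod 2) x := by
      rw [hx, linearIndependent_fin_snoc]
      exact ⟨linearIndependent_fin_snoc.mpr ⟨hli', ha_not⟩, hb_not⟩
    refine ⟨x, hli, ?_⟩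
    have hsum : (∑ i, x i) = u + v + s' := by
      rw [hx, Fin.sum_univ_castSucc]
      simp only [Fin.snoc_castSucc, Fin.snoc_last]
      rw [Fin.sum_univ_castSucc]
      simp only [Fin.snoc_castSucc, Fin.snoc_last, ← hs']
      ext k
      simp only [Pi.add_apply, ha, hb]
      ring_nf
      simp [zmod2_mul_three]
    have hsumsq : (∑ i, vecMulVec (x i) (x i))
        = (∑ i, vecMulVec (x' i) (x' i)) + vecMulVec a a + vecMulVec b b := by
      rw [hx, Fin.sum_univ_castSucc]
      simp only [Fin.snoc_castSucc, Fin.snoc_last]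
      rw [Fin.sum_univ_castSucc]
      simp only [Fin.snoc_castSucc, Fin.snoc_last]
    rw [hsum, hsumsq, hAA', hEq']
    ext i j
    simp only [Matrix.add_apply, vecMulVec, of_apply, ha, hb, Pi.add_apply]
    have := zmod2_key (u i) (u j) (v i) (v j) (s' i) (s' j)
    linear_combination -this

/-- A nonzero alternate symmetric matrix over `F₂` of rank `r` can be written as
`x₁x₁ᵀ + ⋯ + x_r x_rᵀ + (x₁+⋯+x_r)(x₁+⋯+x_r)ᵀ` with the `xᵢ` linearly independent. -/
theorem alternate_canonical {n r : ℕ} (A : Matrix (Fin n) (Fin n) (ZMod 2))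
    (hAs : A.IsSymm) (halt : ∀ i, A i i = 0) (hA0 : A ≠ 0) (hr : A.rank = r) :
    ∃ x : Fin r → Fin n → ZMod 2, LinearIndependent (ZMod 2) x ∧
      A = (∑ i, vecMulVec (x i) (x i)) + vecMulVec (∑ i, x i) (∑ i, x i) := by
  exact alternate_canonical_aux r n A hAs halt hr
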